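/- Finite termination of the atom-inclusion process: since I_t ⊆ {1,…,m} strictly increases by at least one index whenever a violated constraint exists (some |g_i| > λ with i ∉ I_t), and I_t ⊆ {1,…,m} is finite, after at most m iterations no violated constraint exists, i.e., ‖Aᵀ(Ax^t − b)‖_∞ ≤ λ at coordinates outside I_t; combined with the optimality conditions on I_t this means x^t is a global minimizer of λ‖x‖₁ + (1/2)‖b − Ax‖². -/

import Mathlib

open Finset

lemma gmp_dot_swap {n m : ℕ} (A : Matrix (Fin n) (Fin m) ℝ) (r : Fin n → ℝ) (d : Fin m → ℝ) :
    ∑ i, r i * A.mulVec d i = ∑ j, A.transpose.mulVec r j * d j := by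
  simp only [Matrix.mulVec, dotProduct, Matrix.transpose_apply, Finset.sum_mul,
    Finset.mul_sum]
  rw [Finset.sum_comm]
  exact Finset.sum_congr rfl fun j _ => Finset.sum_congr rfl fun i _ => by ring

lemma gmp_expand {n m : ℕ} (A : Matrix (Fin n) (Fin m) ℝ) (b : Fin n → ℝ) (lam : ℝ)
    (f : (Fin m → ℝ) → ℝ)
    (hf : ∀ x, f x = lam * (∑ j, |x j|) + (1/2) * ∑ i, (b i - A.mulVec x i)^2)
    (x y : Fin m → ℝ) :
    f y = f x + lam * (∑ j, (|y j| - |x j|))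
      + (∑ j, A.transpose.mulVec (A.mulVec x - b) j * (y j - x j))
      + (1/2) * ∑ i, (A.mulVec y i - A.mulVec x i)^2 := by
  have h1 := gmp_dot_swap A (A.mulVec x - b) (fun k => y k - x k)
  have e1 : ∀ i, A.mulVec (fun k => y k - x k) i = A.mulVec y i - A.mulVec x i := by
    intro i
    simp [Matrix.mulVec, dotProduct, mul_sub, Finset.sum_sub_distrib]
  simp only [Pi.sub_apply, e1] at h1
  rw [hf y, hf x]
  have q : ∑ i, (b i - A.mulVec y i)^2
      = ∑ i, (b i - A.mulVec x i)^2
        + 2 * ∑ i, (A.mulVec x i - b i) * (A.mulVec y i - A.mulVec x i)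
        + ∑ i, (A.mulVec y i - A.mulVec x i)^2 := by
    rw [Finset.mul_sum, ← Finset.sum_add_distrib, ← Finset.sum_add_distrib]
    exact Finset.sum_congr rfl fun i _ => by ring
  rw [q, h1, Finset.sum_sub_distrib]
  ring

lemma gmp_kkt (lam c v G : ℝ) (hlam : 0 < lam) (hc : 0 ≤ c)
    (h : ∀ s : ℝ, 0 ≤ lam * (|v + s| - |v|) + G * s + (1/2) * s^2 * c) :
    |G| ≤ lam ∧ lam * |v| + G * v ≤ 0 := by
  have habs : |G| ≤ lam := by
    rw [abs_le]
    constructor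
    · rw [← sub_nonneg]
      apply le_of_forall_pos_le_add
      intro ε hε
      have hδ : (0:ℝ) < 2*ε/(c+1) := by positivity
      set δ := 2*ε/(c+1) with hδdef
      have h1 : δ * (c+1) = 2*ε := div_mul_cancel₀ _ (by positivity)
      have h2 := h δ
      have h3 : |v + δ| - |v| ≤ δ := by
        have := abs_add_le v δ
        have : |δ| = δ := abs_of_pos hδ
        nlinarith [abs_add_le v δ, abs_of_pos hδ]
      nlinarith [mul_le_mul_of_nonneg_left h3 hlam.le]
    · rw [← sub_nonneg]
      apply le_of_forall_pos_le_add
      intro ε hε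
      have hδ : (0:ℝ) < 2*ε/(c+1) := by positivity
      set δ := 2*ε/(c+1) with hδdef
      have h1 : δ * (c+1) = 2*ε := div_mul_cancel₀ _ (by positivity)
      have h2 := h (-δ)
      have h3 : |v + -δ| - |v| ≤ δ := by
        nlinarith [abs_add_le v (-δ), abs_of_pos hδ, abs_neg δ]
      nlinarith [mul_le_mul_of_nonneg_left h3 hlam.le]
  refine ⟨habs, ?_⟩
  apply le_of_forall_pos_le_add
  intro ε hε
  have hden : (0:ℝ) < v^2*c+1 := by positivity
  set t := min 1 (2*ε/(v^2*c+1)) with htdef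
  have ht0 : 0 < t := lt_min one_pos (by positivity)
  have ht1 : t ≤ 1 := min_le_left _ _
  have htε : t * (v^2*c+1) ≤ 2*ε := by
    have := min_le_right 1 (2*ε/(v^2*c+1))
    calc t * (v^2*c+1) ≤ (2*ε/(v^2*c+1)) * (v^2*c+1) :=
          mul_le_mul_of_nonneg_right this hden.le
      _ = 2*ε := div_mul_cancel₀ _ (ne_of_gt hden)
  have h2 := h (-(t*v))
  have h3 : |v + -(t*v)| = (1-t)*|v| := by
    have : v + -(t*v) = (1-t)*v := by ring
    rw [this, abs_mul, abs_of_nonneg (by linarith : (0:ℝ) ≤ 1-t)]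
  rw [h3] at h2
  -- h2 : 0 ≤ lam * ((1-t)*|v| - |v|) - G*(t*v) + (1/2)*(t*v)^2*c
  have key : t * (lam * |v| + G * v) ≤ t * ε := by
    nlinarith [sq_nonneg v, mul_nonneg (mul_nonneg ht0.le (sq_nonneg v)) hc]
  have := (mul_le_mul_iff_right₀ ht0).mp key
  linarith

theorem gmp_finite_termination_global_opt {n m : ℕ}
    (A : Matrix (Fin n) (Fin m) ℝ) (b : Fin n → ℝ) (lam : ℝ) (hlam : 0 < lam)
    (f : (Fin m → ℝ) → ℝ)
    (hf : ∀ x, f x = lam * (∑ j, |x j|) + (1/2) * ∑ i, (b i - A.mulVec x i)^2)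
    (I : ℕ → Finset (Fin m)) (x : ℕ → (Fin m → ℝ))
    (g : ℕ → (Fin m → ℝ))
    (hg : ∀ t, g t = A.transpose.mulVec (A.mulVec (x t) - b))
    (hsupp : ∀ t, ∀ j ∉ I t, x t j = 0)
    (hopt : ∀ t, ∀ y : Fin m → ℝ, (∀ j ∉ I t, y j = 0) → f (x t) ≤ f y)
    (hgrow : ∀ t, (∃ j ∉ I t, lam < |g t j|) → I t ⊂ I (t+1)) :
    ∃ t ≤ m, (∀ j ∉ I t, |g t j| ≤ lam) ∧ (∀ y : Fin m → ℝ, f (x t) ≤ f y) := by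
  -- Step 1: finite termination
  have hterm : ∃ t ≤ m, ∀ j ∉ I t, |g t j| ≤ lam := by
    by_contra hC
    push_neg at hC
    have hcard : ∀ t, t ≤ m + 1 → t ≤ (I t).card := by
      intro t
      induction t with
      | zero => intro _; exact Nat.zero_le _
      | succ k ih =>
        intro hk1
        have hk : k ≤ m := by omega
        obtain ⟨j, hj1, hj2⟩ := hC k hk
        have hsub : I k ⊂ I (k+1) := hgrow k ⟨j, hj1, hj2⟩
        have := Finset.card_lt_card hsub
        have := ih (by omega)
        omega
    have h1 := hcard (m+1) le_rfl
    have h2 : (I (m+1)).card ≤ m := by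
      simpa using Finset.card_le_univ (I (m+1))
    omega
  obtain ⟨t, htm, houts⟩ := hterm
  refine ⟨t, htm, houts, ?_⟩
  -- Step 2: KKT conditions at every coordinate
  have hkkt : ∀ j, |g t j| ≤ lam ∧ lam * |x t j| + g t j * (x t j) ≤ 0 := by
    intro j
    by_cases hj : j ∈ I t
    · -- perturbation argument
      apply gmp_kkt lam (∑ i, (A i j)^2) (x t j) (g t j) hlam
        (Finset.sum_nonneg fun i _ => sq_nonneg _)
      intro s
      set y : Fin m → ℝ := fun k => if k = j then x t j + s else x t k with hy
      have hysupp : ∀ k ∉ I t, y k = 0 := by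
        intro k hk
        have : k ≠ j := fun h => hk (h ▸ hj)
        simp [hy, this, hsupp t k hk]
      have hle := hopt t y hysupp
      have hexp := gmp_expand A b lam f hf (x t) y
      have e1 : ∑ k, (|y k| - |x t k|) = |x t j + s| - |x t j| := by
        rw [Finset.sum_eq_single j]
        · simp [hy]
        · intro k _ hkj; simp [hy, hkj]
        · simp
      have e2 : ∑ k, A.transpose.mulVec (A.mulVec (x t) - b) k * (y k - x t k)
          = g t j * s := by
        rw [Finset.sum_eq_single j]
        · rw [hg]; simp [hy]
        · intro k _ hkj; simp [hy, hkj]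
        · simp
      have e3 : ∀ i, A.mulVec y i - A.mulVec (x t) i = A i j * s := by
        intro i
        simp only [Matrix.mulVec, dotProduct]
        rw [← Finset.sum_sub_distrib, Finset.sum_eq_single j]
        · simp [hy]; ring
        · intro k _ hkj; simp [hy, hkj]
        · simp
      have e4 : ∑ i, (A.mulVec y i - A.mulVec (x t) i)^2 = s^2 * ∑ i, (A i j)^2 := by
        rw [Finset.mul_sum]
        exact Finset.sum_congr rfl fun i _ => by rw [e3 i]; ring
      rw [e1, e2, e4] at hexp
      rw [hexp] at hle
      nlinarith [hle]
    · have hx0 := hsupp t j hj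
      refine ⟨houts j hj, ?_⟩
      rw [hx0]
      simp
  -- Step 3: global optimality
  intro y
  have hexp := gmp_expand A b lam f hf (x t) y
  rw [hexp, ← hg t]
  have hsq : 0 ≤ (1/2) * ∑ i, (A.mulVec y i - A.mulVec (x t) i)^2 := by
    positivity
  have hsum : 0 ≤ lam * (∑ j, (|y j| - |x t j|)) + ∑ j, g t j * (y j - x t j) := by
    rw [Finset.mul_sum, ← Finset.sum_add_distrib]
    apply Finset.sum_nonneg
    intro j _
    obtain ⟨h1, h2⟩ := hkkt j
    have h3 : |g t j * y j| ≤ lam * |y j| := by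
      rw [abs_mul]
      exact mul_le_mul_of_nonneg_right h1 (abs_nonneg _)
    nlinarith [neg_abs_le (g t j * y j)]
  linarith
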